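/- Let α be a rational number with 2 < α < 3, and let u be a word over a finite alphabet all of whose proper prefixes are α-A-free. Then u is α-A-free if and only if no suffix of u can be written as x ++ y ++ z with 0 < |x| ≤ |y|, x ~ z, x ++ y an Abelian square, and 2·|x ++ y ++ z| ≥ α·|x ++ y|. (This is the correctness criterion (∗) underlying Algorithm 4.) -/

import Mathlib

/-- `x` is a factor (contiguous subword) of `w`. -/
def IsFactor {A : Type*} (x w : List A) : Prop := ∃ p s, w = p ++ x ++ s

/-- `w` is a strong Abelian `β`-power: `w = u₁ ++ u₂ ++ ⋯ ++ u_k ++ u'` where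
`k = ⌊β⌋`, `u₁ ≠ []`, all `uᵢ` are Abelian equivalent (permutations of each other),
`u'` is Abelian equivalent to the prefix of `u₁` of length `|u'| < |u₁|`,
and `|w| = β·|u₁|`. -/
def IsStrongAPower {A : Type*} (β : ℚ) (w : List A) : Prop :=
  ∃ (u₁ : List A) (us : List (List A)) (u' : List A),
    u₁ ≠ [] ∧
    ((us.length : ℤ) + 1 = ⌊β⌋) ∧
    (∀ u ∈ us, u.Perm u₁) ∧
    u'.length < u₁.length ∧
    u'.Perm (u₁.take u'.length) ∧
    w = (u₁ :: us).flatten ++ u' ∧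
    ((w.length : ℚ) = β * u₁.length)

/-- `w` is `β`-A-free: no factor of `w` is a strong Abelian `γ`-power for a rational `γ ≥ β`. -/
def AFree {A : Type*} (β : ℚ) (w : List A) : Prop :=
  ∀ x, IsFactor x w → ∀ γ : ℚ, β ≤ γ → ¬ IsStrongAPower γ x

/-- `w` is `β⁺`-A-free: no factor of `w` is a strong Abelian `γ`-power for a rational `γ > β`. -/
def APlusFree {A : Type*} (β : ℚ) (w : List A) : Prop :=
  ∀ x, IsFactor x w → ∀ γ : ℚ, β < γ → ¬ IsStrongAPower γ x

/-- An Abelian square: a word of the form `w₁ ++ w₂` with `w₁` nonempty and `w₁ ~ w₂`. -/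
def IsAbelianSquare {A : Type*} (w : List A) : Prop :=
  ∃ w₁ w₂ : List A, w = w₁ ++ w₂ ∧ w₁ ≠ [] ∧ w₁.Perm w₂

theorem statement_9 {A : Type*} [Fintype A] (α : ℚ) (hα₁ : 2 < α) (hα₂ : α < 3)
    (u : List A) (hpre : ∀ v : List A, v <+: u → v ≠ u → AFree α v) :
    AFree α u ↔
      ¬ ∃ (p x y z : List A), u = p ++ (x ++ y ++ z) ∧
        x ≠ [] ∧ x.length ≤ y.length ∧ x.Perm z ∧ IsAbelianSquare (x ++ y) ∧
        α * ((x.length : ℚ) + (y.length : ℚ)) ≤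
          2 * ((x.length : ℚ) + (y.length : ℚ) + (z.length : ℚ)) := by
  have hα3 : α ≤ 3 := le_of_lt hα₂
  constructor
  · rintro hfree ⟨p, x, y, z, hu, hx, hxy, hxz, ⟨w₁, w₂, hw, hw₁, hperm⟩, hlen⟩
    have hfac : IsFactor (x ++ y ++ z) u := ⟨p, [], by simp [hu]⟩
    have hw1pos : 0 < w₁.length := List.length_pos_iff.mpr hw₁
    have hlw : w₁.length = w₂.length := hperm.length_eq
    have hlsum : x.length + y.length = w₁.length + w₂.length := by
      have h := congrArg List.length hw; simpa using h
    have hxw1 : x.length ≤ w₁.length := by omega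
    have hzx : z.length = x.length := hxz.length_eq.symm
    have hxtake : x = w₁.take x.length := by
      have h1 : (x ++ y).take x.length = x := List.take_left
      rw [hw, List.take_append_of_le_length hxw1] at h1
      exact h1.symm
    have hNlen : (x ++ y ++ z).length = 2 * w₁.length + z.length := by
      simp only [List.length_append]; omega
    have ha : (0:ℚ) < (w₁.length:ℚ) := by exact_mod_cast hw1pos
    have hNQ : ((x ++ y ++ z).length : ℚ) = 2 * (w₁.length:ℚ) + (z.length:ℚ) := by
      exact_mod_cast congrArg (Nat.cast (R := ℚ)) hNlen
    have hxyQ : (x.length:ℚ) + (y.length:ℚ) = 2 * (w₁.length:ℚ) := by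
      exact_mod_cast (by omega : x.length + y.length = 2 * w₁.length)
    rw [hxyQ] at hlen
    by_cases hzlt : z.length < w₁.length
    · set γ : ℚ := ((x ++ y ++ z).length : ℚ) / (w₁.length : ℚ) with hγdef
      have hγmul : γ * (w₁.length:ℚ) = ((x ++ y ++ z).length : ℚ) :=
        div_mul_cancel₀ _ (ne_of_gt ha)
      have hγge : α ≤ γ := by
        rw [hγdef, le_div_iff₀ ha, hNQ]
        linarith [hlen]
      have hfloor : ⌊γ⌋ = 2 := by
        rw [Int.floor_eq_iff]
        constructor
        · push_cast
          rw [hγdef, le_div_iff₀ ha, hNQ]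
          have : (0:ℚ) ≤ (z.length:ℚ) := by positivity
          linarith
        · push_cast
          rw [hγdef, div_lt_iff₀ ha, hNQ]
          have : (z.length:ℚ) < (w₁.length:ℚ) := by exact_mod_cast hzlt
          linarith
      refine hfree _ hfac γ hγge ⟨w₁, [w₂], z, hw₁, ?_, ?_, hzlt, ?_, ?_, hγmul.symm⟩
      · rw [hfloor]; rfl
      · intro v hv; rw [List.mem_singleton] at hv; subst hv; exact hperm.symm
      · rw [hzx, ← hxtake]; exact hxz.symm
      · rw [show (x ++ y ++ z) = (x ++ y) ++ z from rfl, hw]; simp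
    · have hzeq : z.length = w₁.length := by omega
      have hxeqw : x = w₁ := by
        have hxlw : x.length = w₁.length := by omega
        rw [hxlw, List.take_length] at hxtake
        exact hxtake
      have hyeq : y = w₂ := by
        have h := hw; rw [hxeqw] at h; exact List.append_cancel_left h
      refine hfree _ hfac 3 hα3 ⟨w₁, [w₂, z], [], hw₁, ?_, ?_, ?_, by simp, ?_, ?_⟩
      · show (2:ℤ) + 1 = ⌊(3:ℚ)⌋; norm_num
      · intro v hv
        simp only [List.mem_cons, List.not_mem_nil, or_false] at hv
        rcases hv with rfl | rfl
        · exact hperm.symm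
        · rw [← hxeqw]; exact hxz.symm
      · simpa using hw1pos
      · rw [hxeqw, hyeq]; simp
      · have h3 : (x ++ y ++ z).length = 3 * w₁.length := by
          simp only [List.length_append]; omega
        rw [h3]; push_cast; ring
  · intro hno x hfacx γ hγ hpow
    obtain ⟨p, s, hu⟩ := hfacx
    by_cases hs : s = []
    · subst hs
      rw [List.append_nil] at hu
      obtain ⟨u₁, us, u', hu₁, hfl, hus, hu'lt, hu'perm, hxeq, hxlen⟩ := hpow
      have hu1pos : 0 < u₁.length := List.length_pos_iff.mpr hu₁
      have haQ : (0:ℚ) < (u₁.length:ℚ) := by exact_mod_cast hu1pos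
      have h2γ : (2:ℚ) < γ := lt_of_lt_of_le hα₁ hγ
      have h2fl : (2:ℤ) ≤ ⌊γ⌋ := Int.le_floor.mpr (by push_cast; linarith)
      match us, hfl, hus, hxeq with
      | [], hfl, hus, hxeq => simp at hfl; omega
      | [u₂], hfl, hus, hxeq =>
        have hfl2 : ⌊γ⌋ = 2 := by simp at hfl; omega
        have hγlt3 : γ < 3 := by
          have h := Int.lt_floor_add_one γ
          rw [hfl2] at h; push_cast at h; linarith
        have hl2 : u₂.length = u₁.length := (hus u₂ (by simp)).length_eq
        have hxeq' : x = u₁ ++ u₂ ++ u' := by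
          rw [hxeq]; simp [List.append_assoc]
        have hu'ne : u' ≠ [] := by
          intro h
          subst h
          rw [hxeq'] at hxlen
          simp only [List.append_nil, List.length_append] at hxlen
          have h2 : (2:ℚ) * (u₁.length:ℚ) = γ * (u₁.length:ℚ) := by
            rw [← hxlen]; push_cast [hl2]; ring
          have hg2 : γ = 2 := mul_right_cancel₀ (ne_of_gt haQ) h2.symm
          linarith
        have hnpos : 0 < u'.length := List.length_pos_iff.mpr hu'ne
        set n := u'.length with hn
        have hkey : u₁.take n ++ (u₁.drop n ++ u₂) = u₁ ++ u₂ := by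
          rw [← List.append_assoc, List.take_append_drop]
        refine hno ⟨p, u₁.take n, u₁.drop n ++ u₂, u', ?_, ?_, ?_, hu'perm.symm, ?_, ?_⟩
        · rw [hu, hxeq', show u₁.take n ++ (u₁.drop n ++ u₂) ++ u'
            = (u₁.take n ++ (u₁.drop n ++ u₂)) ++ u' from rfl, hkey]
        · intro h
          have h1 := congrArg List.length h
          simp only [List.length_take, List.length_nil] at h1
          omega
        · simp only [List.length_take, List.length_drop, List.length_append]
          omega
        · exact ⟨u₁, u₂, hkey, hu₁, (hus u₂ (by simp)).symm⟩
        · have hxyl : (u₁.take n).length + (u₁.drop n ++ u₂).length = 2 * u₁.length := by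
            simp only [List.length_take, List.length_drop, List.length_append]
            omega
          have hxl : x.length = 2 * u₁.length + n := by
            rw [hxeq']; simp only [List.length_append]; omega
          have hQ : γ * (u₁.length:ℚ) = 2 * (u₁.length:ℚ) + (n:ℚ) := by
            rw [← hxlen, hxl]; push_cast; ring
          have hxyQ : ((u₁.take n).length:ℚ) + ((u₁.drop n ++ u₂).length:ℚ)
              = 2 * (u₁.length:ℚ) := by exact_mod_cast hxyl
          rw [hxyQ]
          have hmul : α * (u₁.length:ℚ) ≤ γ * (u₁.length:ℚ) :=
            mul_le_mul_of_nonneg_right hγ (le_of_lt haQ)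
          linarith [hQ, hmul]
      | u₂ :: u₃ :: rest, hfl, hus, hxeq =>
        have hl2 : u₂.length = u₁.length := (hus u₂ (by simp)).length_eq
        have hl3 : u₃.length = u₁.length := (hus u₃ (by simp)).length_eq
        have hxeq' : x = u₁ ++ u₂ ++ u₃ ++ (rest.flatten ++ u') := by
          rw [hxeq]; simp [List.append_assoc]
        by_cases hrest : rest.flatten ++ u' = []
        · have hxeq3 : x = u₁ ++ u₂ ++ u₃ := by rw [hxeq', hrest, List.append_nil]
          refine hno ⟨p, u₁, u₂, u₃, by rw [hu, hxeq3], hu₁, le_of_eq hl2.symm,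
            (hus u₃ (by simp)).symm, ⟨u₁, u₂, rfl, hu₁, (hus u₂ (by simp)).symm⟩, ?_⟩
          have h2 : (u₂.length:ℚ) = (u₁.length:ℚ) := by exact_mod_cast hl2
          have h3 : (u₃.length:ℚ) = (u₁.length:ℚ) := by exact_mod_cast hl3
          rw [h2, h3]
          nlinarith [haQ]
        · have hvpre : (p ++ (u₁ ++ u₂ ++ u₃)) <+: u :=
            ⟨rest.flatten ++ u', by rw [hu, hxeq']; simp [List.append_assoc]⟩
          have hne : p ++ (u₁ ++ u₂ ++ u₃) ≠ u := by
            intro h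
            have h1 := congrArg List.length h
            have h2 := congrArg List.length hu
            rw [hxeq'] at h2
            simp only [List.length_append] at h1 h2
            have hr : (rest.flatten ++ u').length ≠ 0 :=
              fun hh => hrest (List.length_eq_zero_iff.mp hh)
            rw [List.length_append] at hr
            omega
          refine hpre _ hvpre hne (u₁ ++ u₂ ++ u₃) ⟨p, [], by simp⟩ 3 hα3
            ⟨u₁, [u₂, u₃], [], hu₁, ?_, ?_, by simpa using hu1pos, by simp, by simp, ?_⟩
          · show (2:ℤ) + 1 = ⌊(3:ℚ)⌋; norm_num
          · intro v hv
            simp only [List.mem_cons, List.not_mem_nil, or_false] at hv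
            rcases hv with rfl | rfl
            · exact hus v (by simp)
            · exact hus v (by simp)
          · have h3 : (u₁ ++ u₂ ++ u₃).length = 3 * u₁.length := by
              simp only [List.length_append]; omega
            rw [h3]; push_cast; ring
    · have hprefix : (p ++ x) <+: u := ⟨s, by rw [hu]⟩
      have hne : p ++ x ≠ u := by
        intro h
        have h1 := congrArg List.length h
        have h2 := congrArg List.length hu
        simp only [List.length_append] at h1 h2
        have hsl : s.length ≠ 0 := fun hh => hs (List.length_eq_zero_iff.mp hh)
        omega
      exact hpre _ hprefix hne x ⟨p, [], by simp⟩ γ hγ hpow
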